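/- Assume q₂ = 0. Set p₁ = a/(a+q₁), and set p₂ = (c₁/d)·p₁ if c₂ = 0, while p₂ = (−d + √(d(d + 4c₁c₂p₁)))/(2d·c₂) if c₂ > 0. Then (p₁, p₂, 0) is the unique zero of the vector field g(·,0) in [0,∞)³. -/

import Mathlib

open Set Real

/-- the unique nonnegative zero of `g(·,0)` when `q₂ = 0`. -/
theorem stmt_9
    (a q₁ c₁ d c₁M dM q₂ q₃ c₂ c₃ c₂M c₃M : ℝ)
    (ha : 0 < a) (hq₁ : 0 < q₁) (hc₁ : 0 < c₁) (hd : 0 < d)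
    (hc₁M : 0 < c₁M) (hdM : 0 < dM)
    (hq₂ : 0 ≤ q₂) (hq₃ : 0 ≤ q₃) (hc₂ : 0 ≤ c₂) (hc₃ : 0 ≤ c₃)
    (hc₂M : 0 ≤ c₂M) (hc₃M : 0 ≤ c₃M)
    (g : ℝ × ℝ × ℝ → ℝ → ℝ × ℝ × ℝ)
    (hg : ∀ (x : ℝ × ℝ × ℝ) (i : ℝ), g x i =
      (a * (1 - x.1) - (q₁ + q₂ * x.2.1 + q₃ * x.2.2) * x.1,
       c₁ / (1 + c₂ * x.2.1 + c₃ * x.2.2) * x.1 - d * x.2.1,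
       c₁M / (1 + c₂M * x.2.1 + c₃M * x.2.2) * i - dM * x.2.2))
    (hq₂0 : q₂ = 0)
    (p₁ p₂ : ℝ) (hp₁ : p₁ = a / (a + q₁))
    (hp₂0 : c₂ = 0 → p₂ = c₁ / d * p₁)
    (hp₂1 : 0 < c₂ → p₂ = (-d + Real.sqrt (d * (d + 4 * c₁ * c₂ * p₁)))
      / (2 * d * c₂)) :
    g (p₁, p₂, 0) 0 = 0 ∧
    ∀ y : ℝ × ℝ × ℝ, 0 ≤ y.1 → 0 ≤ y.2.1 → 0 ≤ y.2.2 → g y 0 = 0 →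
      y = (p₁, p₂, 0) := by
  have haq : 0 < a + q₁ := by linarith
  have hp₁pos : 0 < p₁ := by rw [hp₁]; positivity
  have hkey : 0 ≤ p₂ ∧ d * p₂ * (1 + c₂ * p₂) = c₁ * p₁ := by
    rcases eq_or_lt_of_le hc₂ with h0 | h0
    · have h := hp₂0 h0.symm
      refine ⟨by rw [h]; positivity, ?_⟩
      rw [h, ← h0]; field_simp; ring
    · have h := hp₂1 h0
      set s := Real.sqrt (d * (d + 4 * c₁ * c₂ * p₁)) with hs
      have hsnn : 0 ≤ s := Real.sqrt_nonneg _
      have hssq : s ^ 2 = d * (d + 4 * c₁ * c₂ * p₁) := by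
        rw [hs, Real.sq_sqrt]; positivity
      have hds : d ≤ s := by
        nlinarith [mul_pos hd (mul_pos hc₁ (mul_pos h0 hp₁pos))]
      refine ⟨by rw [h]; exact div_nonneg (by linarith) (by positivity), ?_⟩
      rw [h]
      have h2 : (2 * d * c₂) ≠ 0 := by positivity
      field_simp
      linear_combination hssq
  obtain ⟨hp₂nn, heq⟩ := hkey
  have hden : 0 < 1 + c₂ * p₂ := by positivity
  constructor
  · rw [hg]
    simp only [Prod.mk_eq_zero]
    refine ⟨?_, ?_, by ring⟩
    · rw [hq₂0, hp₁]; field_simp; ring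
    · rw [mul_zero, add_zero, div_mul_eq_mul_div, sub_eq_zero,
        div_eq_iff (ne_of_gt hden)]
      linarith
  · rintro ⟨y₁, y₂, y₃⟩ hy₁ hy₂ hy₃ hy
    simp only at hy₁ hy₂ hy₃
    rw [hg, Prod.ext_iff, Prod.ext_iff] at hy
    simp only [Prod.fst_zero, Prod.snd_zero] at hy
    obtain ⟨e1, e2, e3⟩ := hy
    have hy₃0 : y₃ = 0 := by
      have h3 : dM * y₃ = 0 := by
        have : c₁M / (1 + c₂M * y₂ + c₃M * y₃) * 0 = 0 := by ring
        linarith [e3, this]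
      exact (mul_eq_zero.mp h3).resolve_left (ne_of_gt hdM)
    subst hy₃0
    have hy₁p : y₁ = p₁ := by
      rw [hq₂0] at e1
      rw [hp₁, eq_div_iff (ne_of_gt haq)]
      linear_combination -e1
    have hdy : (0:ℝ) < 1 + c₂ * y₂ + c₃ * 0 := by positivity
    have e2' : c₁ * p₁ = d * y₂ * (1 + c₂ * y₂) := by
      rw [div_mul_eq_mul_div, sub_eq_zero, div_eq_iff (ne_of_gt hdy), hy₁p] at e2
      linear_combination e2
    have hy₂p : y₂ = p₂ := by
      nlinarith [heq, e2', sq_nonneg (y₂ - p₂), sq_nonneg (y₂ + p₂),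
        mul_nonneg hc₂ hy₂, mul_nonneg hc₂ hp₂nn, mul_nonneg hy₂ hp₂nn,
        mul_nonneg (mul_nonneg hd.le hc₂) (add_nonneg hy₂ hp₂nn)]
    simp only [Prod.mk.injEq]
    exact ⟨hy₁p, hy₂p, trivial⟩
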